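/- Let 𝒳, 𝒴, 𝒵 be nonempty finite sets, α ∈ (1,∞), W₁ a channel from 𝒳 to 𝒴, W₂ a channel from 𝒴 to 𝒵, and W the composite channel from 𝒳 to 𝒵 given by W(z|x) = ∑_{y∈𝒴} W₁(y|x)·W₂(z|y). Then the maximal α-leakage satisfies both data processing inequalities: sup_Q I_α^S(Q,W) ≤ sup_Q I_α^S(Q,W₁) (supremum over pmfs Q on 𝒳), and sup_{Q on 𝒳} I_α^S(Q,W) ≤ sup_{R on 𝒴} I_α^S(R,W₂). -/

import Mathlib

open Real BigOperators

-- Minkowski for a finite family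
lemma Lp_sum_le_aux {ι X : Type} [Fintype X] (s : Finset ι) (u : ι → X → ℝ)
    (hu : ∀ i x, 0 ≤ u i x) {p : ℝ} (hp : 1 ≤ p) :
    (∑ x, (∑ i ∈ s, u i x) ^ p) ^ (1/p) ≤ ∑ i ∈ s, (∑ x, u i x ^ p) ^ (1/p) := by
  have hp0 : p ≠ 0 := by linarith
  classical
  induction s using Finset.induction_on with
  | empty => simp [Real.zero_rpow hp0, Real.zero_rpow (inv_ne_zero hp0)]
  | @insert a s ha ih =>
    simp only [Finset.sum_insert ha]
    have habs : ∀ x : X, |u a x + ∑ i ∈ s, u i x| = u a x + ∑ i ∈ s, u i x := fun x =>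
      abs_of_nonneg (add_nonneg (hu a x) (Finset.sum_nonneg fun i _ => hu i x))
    calc (∑ x, (u a x + ∑ i ∈ s, u i x) ^ p) ^ (1/p)
        = (∑ x, |u a x + ∑ i ∈ s, u i x| ^ p) ^ (1/p) := by
          congr 1; exact Finset.sum_congr rfl fun x _ => by rw [habs x]
      _ ≤ (∑ x, |u a x| ^ p) ^ (1/p) + (∑ x, |∑ i ∈ s, u i x| ^ p) ^ (1/p) :=
          Real.Lp_add_le Finset.univ (u a) (fun x => ∑ i ∈ s, u i x) hp
      _ = (∑ x, u a x ^ p) ^ (1/p) + (∑ x, (∑ i ∈ s, u i x) ^ p) ^ (1/p) := by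
          congr 2
          · exact Finset.sum_congr rfl fun x _ => by rw [abs_of_nonneg (hu a x)]
          · exact Finset.sum_congr rfl fun x _ => by
              rw [abs_of_nonneg (Finset.sum_nonneg fun i _ => hu i x)]
      _ ≤ (∑ x, u a x ^ p) ^ (1/p) + ∑ i ∈ s, (∑ x, u i x ^ p) ^ (1/p) :=
          add_le_add_right ih _


/-- A probability mass function on a finite set: nonnegative and sums to 1. -/
def IsPMF {X : Type} [Fintype X] (P : X → ℝ) : Prop :=
  (∀ x, 0 ≤ P x) ∧ ∑ x, P x = 1

/-- Sibson mutual information of order α of input pmf `Q` and channel `W`. -/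
noncomputable def sibsonMI (α : ℝ) {X Y : Type} [Fintype X] [Fintype Y]
    (Q : X → ℝ) (W : X → Y → ℝ) : ℝ :=
  (α / (α - 1)) * Real.log (∑ y, (∑ x, Q x * W x y ^ α) ^ (1 / α))

/-- Maximal α-leakage of a channel `W`. -/
noncomputable def maxAlphaLeakage (α : ℝ) {X Y : Type} [Fintype X] [Fintype Y]
    (W : X → Y → ℝ) : ℝ :=
  sSup {v : ℝ | ∃ Q : X → ℝ, IsPMF Q ∧ v = sibsonMI α Q W}

-- positivity of the Sibson sum
lemma Ssum_pos {X Y : Type} [Fintype X] [Fintype Y] {α : ℝ} (hα : 1 < α)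
    {Q : X → ℝ} (hQ : IsPMF Q) {W : X → Y → ℝ} (hW : ∀ x, IsPMF (W x)) :
    0 < ∑ y, (∑ x, Q x * W x y ^ α) ^ (1/α) := by
  obtain ⟨x₀, hx₀⟩ : ∃ x, 0 < Q x := by
    by_contra h
    push_neg at h
    have : ∑ x, Q x = 0 := Finset.sum_eq_zero fun x _ => le_antisymm (h x) (hQ.1 x)
    rw [hQ.2] at this; norm_num at this
  obtain ⟨y₀, hy₀⟩ : ∃ y, 0 < W x₀ y := by
    by_contra h
    push_neg at h
    have : ∑ y, W x₀ y = 0 := Finset.sum_eq_zero fun y _ => le_antisymm (h y) ((hW x₀).1 y)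
    rw [(hW x₀).2] at this; norm_num at this
  refine Finset.sum_pos' (fun y _ => Real.rpow_nonneg (Finset.sum_nonneg fun x _ =>
    mul_nonneg (hQ.1 x) (Real.rpow_nonneg ((hW x).1 y) α)) _) ⟨y₀, Finset.mem_univ _, ?_⟩
  refine Real.rpow_pos_of_pos ?_ _
  refine Finset.sum_pos' (fun x _ => mul_nonneg (hQ.1 x) (Real.rpow_nonneg ((hW x).1 y₀) α))
    ⟨x₀, Finset.mem_univ _, mul_pos hx₀ (Real.rpow_pos_of_pos hy₀ α)⟩

-- upper bound by the cardinality
lemma Ssum_le_card {X Y : Type} [Fintype X] [Fintype Y] {α : ℝ} (hα : 1 < α)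
    {Q : X → ℝ} (hQ : IsPMF Q) {W : X → Y → ℝ} (hW : ∀ x, IsPMF (W x)) :
    ∑ y, (∑ x, Q x * W x y ^ α) ^ (1/α) ≤ (Fintype.card Y : ℝ) := by
  have h1 : ∀ y, (∑ x, Q x * W x y ^ α) ^ (1/α) ≤ 1 := by
    intro y
    apply Real.rpow_le_one (Finset.sum_nonneg fun x _ =>
      mul_nonneg (hQ.1 x) (Real.rpow_nonneg ((hW x).1 y) α))
    · calc ∑ x, Q x * W x y ^ α ≤ ∑ x, Q x * 1 := by
            refine Finset.sum_le_sum fun x _ => mul_le_mul_of_nonneg_left ?_ (hQ.1 x)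
            refine Real.rpow_le_one ((hW x).1 y) ?_ (by linarith)
            calc W x y ≤ ∑ y', W x y' :=
                  Finset.single_le_sum (fun y' _ => (hW x).1 y') (Finset.mem_univ y)
              _ = 1 := (hW x).2
        _ = 1 := by simp [hQ.2]
    · positivity
  calc ∑ y, (∑ x, Q x * W x y ^ α) ^ (1/α) ≤ ∑ _y : Y, (1:ℝ) :=
        Finset.sum_le_sum fun y _ => h1 y
    _ = (Fintype.card Y : ℝ) := by simp

-- core inequality 1 (Minkowski direction)
lemma Ssum_core1 {X Y Z : Type} [Fintype X] [Fintype Y] [Fintype Z] {α : ℝ} (hα : 1 < α)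
    {Q : X → ℝ} (hQ : IsPMF Q) {W₁ : X → Y → ℝ} (hW₁ : ∀ x, IsPMF (W₁ x))
    {W₂ : Y → Z → ℝ} (hW₂ : ∀ y, IsPMF (W₂ y)) :
    ∑ z, (∑ x, Q x * (∑ y, W₁ x y * W₂ y z) ^ α) ^ (1/α) ≤
      ∑ y, (∑ x, Q x * W₁ x y ^ α) ^ (1/α) := by
  have hα0 : (0:ℝ) < α := by linarith
  have hαne : α ≠ 0 := ne_of_gt hα0
  set g : X → ℝ := fun x => Q x ^ (1/α) with hg
  have hgpow : ∀ x, g x ^ α = Q x := fun x => by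
    rw [hg, ← Real.rpow_mul (hQ.1 x), one_div_mul_cancel hαne, Real.rpow_one]
  have key : ∀ z, (∑ x, Q x * (∑ y, W₁ x y * W₂ y z) ^ α) ^ (1/α) ≤
      ∑ y, W₂ y z * (∑ x, Q x * W₁ x y ^ α) ^ (1/α) := by
    intro z
    have hrw : ∀ x, Q x * (∑ y, W₁ x y * W₂ y z) ^ α
        = (∑ y, W₂ y z * (g x * W₁ x y)) ^ α := by
      intro x
      have h1 : ∑ y, W₂ y z * (g x * W₁ x y) = g x * ∑ y, W₁ x y * W₂ y z := by
        rw [Finset.mul_sum]; exact Finset.sum_congr rfl fun y _ => by ring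
      rw [h1, Real.mul_rpow (Real.rpow_nonneg (hQ.1 x) _)
        (Finset.sum_nonneg fun y _ => mul_nonneg ((hW₁ x).1 y) ((hW₂ y).1 z)), hgpow]
    calc (∑ x, Q x * (∑ y, W₁ x y * W₂ y z) ^ α) ^ (1/α)
        = (∑ x, (∑ y, W₂ y z * (g x * W₁ x y)) ^ α) ^ (1/α) := by
          congr 1; exact Finset.sum_congr rfl fun x _ => hrw x
      _ ≤ ∑ y, (∑ x, (W₂ y z * (g x * W₁ x y)) ^ α) ^ (1/α) :=
          Lp_sum_le_aux Finset.univ (fun y x => W₂ y z * (g x * W₁ x y))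
            (fun y x => mul_nonneg ((hW₂ y).1 z)
              (mul_nonneg (Real.rpow_nonneg (hQ.1 x) _) ((hW₁ x).1 y))) hα.le
      _ = ∑ y, W₂ y z * (∑ x, Q x * W₁ x y ^ α) ^ (1/α) := by
          refine Finset.sum_congr rfl fun y _ => ?_
          have h2 : ∀ x, (W₂ y z * (g x * W₁ x y)) ^ α = W₂ y z ^ α * (Q x * W₁ x y ^ α) := by
            intro x
            rw [Real.mul_rpow ((hW₂ y).1 z)
                (mul_nonneg (Real.rpow_nonneg (hQ.1 x) _) ((hW₁ x).1 y)),
              Real.mul_rpow (Real.rpow_nonneg (hQ.1 x) _) ((hW₁ x).1 y), hgpow]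
          rw [Finset.sum_congr rfl fun x _ => h2 x, ← Finset.mul_sum,
            Real.mul_rpow (Real.rpow_nonneg ((hW₂ y).1 z) _) (Finset.sum_nonneg fun x _ =>
              mul_nonneg (hQ.1 x) (Real.rpow_nonneg ((hW₁ x).1 y) _)),
            ← Real.rpow_mul ((hW₂ y).1 z), mul_one_div_cancel hαne, Real.rpow_one]
  calc ∑ z, (∑ x, Q x * (∑ y, W₁ x y * W₂ y z) ^ α) ^ (1/α)
      ≤ ∑ z, ∑ y, W₂ y z * (∑ x, Q x * W₁ x y ^ α) ^ (1/α) :=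
        Finset.sum_le_sum fun z _ => key z
    _ = ∑ y, (∑ z, W₂ y z) * (∑ x, Q x * W₁ x y ^ α) ^ (1/α) := by
        rw [Finset.sum_comm]
        exact Finset.sum_congr rfl fun y _ => by rw [Finset.sum_mul]
    _ = ∑ y, (∑ x, Q x * W₁ x y ^ α) ^ (1/α) := by
        exact Finset.sum_congr rfl fun y _ => by rw [(hW₂ y).2, one_mul]

-- core inequality 2 (Jensen direction)
lemma Ssum_core2 {X Y Z : Type} [Fintype X] [Fintype Y] [Fintype Z] {α : ℝ} (hα : 1 < α)
    {Q : X → ℝ} (hQ : IsPMF Q) {W₁ : X → Y → ℝ} (hW₁ : ∀ x, IsPMF (W₁ x))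
    {W₂ : Y → Z → ℝ} (hW₂ : ∀ y, IsPMF (W₂ y)) :
    ∑ z, (∑ x, Q x * (∑ y, W₁ x y * W₂ y z) ^ α) ^ (1/α) ≤
      ∑ z, (∑ y, (∑ x, Q x * W₁ x y) * W₂ y z ^ α) ^ (1/α) := by
  refine Finset.sum_le_sum fun z _ => ?_
  refine Real.rpow_le_rpow (Finset.sum_nonneg fun x _ => mul_nonneg (hQ.1 x)
    (Real.rpow_nonneg (Finset.sum_nonneg fun y _ =>
      mul_nonneg ((hW₁ x).1 y) ((hW₂ y).1 z)) _)) ?_ (by positivity)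
  calc ∑ x, Q x * (∑ y, W₁ x y * W₂ y z) ^ α
      ≤ ∑ x, Q x * (∑ y, W₁ x y * W₂ y z ^ α) := by
        refine Finset.sum_le_sum fun x _ => mul_le_mul_of_nonneg_left ?_ (hQ.1 x)
        exact Real.rpow_arith_mean_le_arith_mean_rpow Finset.univ (W₁ x) (fun y => W₂ y z)
          (fun y _ => (hW₁ x).1 y) (hW₁ x).2 (fun y _ => (hW₂ y).1 z) hα.le
    _ = ∑ y, (∑ x, Q x * W₁ x y) * W₂ y z ^ α := by
        simp_rw [Finset.mul_sum, Finset.sum_mul]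
        rw [Finset.sum_comm]
        exact Finset.sum_congr rfl fun y _ => Finset.sum_congr rfl fun x _ => by ring

lemma sibson_le_of_Ssum_le {X X' Y Y' : Type} [Fintype X] [Fintype X'] [Fintype Y] [Fintype Y']
    {α : ℝ} (hα : 1 < α) {Q : X → ℝ} {W : X → Y → ℝ} {Q' : X' → ℝ} {W' : X' → Y' → ℝ}
    (hpos : 0 < ∑ y, (∑ x, Q x * W x y ^ α) ^ (1/α))
    (h : ∑ y, (∑ x, Q x * W x y ^ α) ^ (1/α) ≤ ∑ y, (∑ x, Q' x * W' x y ^ α) ^ (1/α)) :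
    sibsonMI α Q W ≤ sibsonMI α Q' W' := by
  unfold sibsonMI
  have hc : 0 ≤ α / (α - 1) := div_nonneg (by linarith) (by linarith)
  exact mul_le_mul_of_nonneg_left (Real.log_le_log hpos h) hc

lemma comp_isPMF {X Y Z : Type} [Fintype X] [Fintype Y] [Fintype Z]
    {W₁ : X → Y → ℝ} (hW₁ : ∀ x, IsPMF (W₁ x))
    {W₂ : Y → Z → ℝ} (hW₂ : ∀ y, IsPMF (W₂ y)) (x : X) :
    IsPMF (fun z => ∑ y, W₁ x y * W₂ y z) := by
  constructor
  · exact fun z => Finset.sum_nonneg fun y _ => mul_nonneg ((hW₁ x).1 y) ((hW₂ y).1 z)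
  · rw [Finset.sum_comm]
    calc ∑ y, ∑ z, W₁ x y * W₂ y z = ∑ y, W₁ x y * ∑ z, W₂ y z := by
          exact Finset.sum_congr rfl fun y _ => by rw [Finset.mul_sum]
      _ = ∑ y, W₁ x y := Finset.sum_congr rfl fun y _ => by rw [(hW₂ y).2, mul_one]
      _ = 1 := (hW₁ x).2

lemma push_isPMF {X Y : Type} [Fintype X] [Fintype Y]
    {Q : X → ℝ} (hQ : IsPMF Q) {W₁ : X → Y → ℝ} (hW₁ : ∀ x, IsPMF (W₁ x)) :
    IsPMF (fun y => ∑ x, Q x * W₁ x y) := by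
  constructor
  · exact fun y => Finset.sum_nonneg fun x _ => mul_nonneg (hQ.1 x) ((hW₁ x).1 y)
  · rw [Finset.sum_comm]
    calc ∑ x, ∑ y, Q x * W₁ x y = ∑ x, Q x * ∑ y, W₁ x y := by
          exact Finset.sum_congr rfl fun x _ => by rw [Finset.mul_sum]
      _ = ∑ x, Q x := Finset.sum_congr rfl fun x _ => by rw [(hW₁ x).2, mul_one]
      _ = 1 := hQ.2

lemma uniform_isPMF (X : Type) [Fintype X] [Nonempty X] :
    IsPMF (fun _ : X => (Fintype.card X : ℝ)⁻¹) := by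
  constructor
  · intro x; positivity
  · rw [Finset.sum_const]
    simp [Finset.card_univ, mul_inv_cancel₀ (by
      exact_mod_cast Fintype.card_ne_zero : (Fintype.card X : ℝ) ≠ 0)]

lemma bdd_leak {X Y : Type} [Fintype X] [Fintype Y] {α : ℝ} (hα : 1 < α)
    {W : X → Y → ℝ} (hW : ∀ x, IsPMF (W x)) :
    BddAbove {v : ℝ | ∃ Q : X → ℝ, IsPMF Q ∧ v = sibsonMI α Q W} := by
  refine ⟨(α / (α - 1)) * Real.log (Fintype.card Y : ℝ), ?_⟩
  rintro v ⟨Q, hQ, rfl⟩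
  unfold sibsonMI
  have hc : 0 ≤ α / (α - 1) := div_nonneg (by linarith) (by linarith)
  exact mul_le_mul_of_nonneg_left
    (Real.log_le_log (Ssum_pos hα hQ hW) (Ssum_le_card hα hQ hW)) hc

/-- data processing inequalities for the maximal α-leakage
under the Markov chain `X - Y - Z` given by composing channels. -/
theorem maxAlphaLeakage_data_processing {X Y Z : Type}
    [Fintype X] [Fintype Y] [Fintype Z] [Nonempty X] [Nonempty Y] [Nonempty Z]
    (α : ℝ) (hα : 1 < α)
    (W₁ : X → Y → ℝ) (hW₁ : ∀ x, IsPMF (W₁ x))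
    (W₂ : Y → Z → ℝ) (hW₂ : ∀ y, IsPMF (W₂ y)) :
    maxAlphaLeakage α (fun x z => ∑ y, W₁ x y * W₂ y z) ≤
        maxAlphaLeakage α W₁ ∧
    maxAlphaLeakage α (fun x z => ∑ y, W₁ x y * W₂ y z) ≤
        maxAlphaLeakage α W₂ := by
  have hWc : ∀ x, IsPMF (fun z => ∑ y, W₁ x y * W₂ y z) := comp_isPMF hW₁ hW₂
  have hne : Set.Nonempty {v : ℝ | ∃ Q : X → ℝ, IsPMF Q ∧
      v = sibsonMI α Q (fun x z => ∑ y, W₁ x y * W₂ y z)} :=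
    ⟨_, _, uniform_isPMF X, rfl⟩
  constructor
  · refine csSup_le hne ?_
    rintro v ⟨Q, hQ, rfl⟩
    have h1 : sibsonMI α Q (fun x z => ∑ y, W₁ x y * W₂ y z) ≤ sibsonMI α Q W₁ :=
      sibson_le_of_Ssum_le (X := X) (X' := X) (Y := Z) (Y' := Y) (Q := Q)
        (W := fun x z => ∑ y, W₁ x y * W₂ y z)
        (Q' := Q) (W' := W₁) hα (Ssum_pos hα hQ hWc) (Ssum_core1 hα hQ hW₁ hW₂)
    exact h1.trans (le_csSup (bdd_leak hα hW₁) ⟨Q, hQ, rfl⟩)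
  · refine csSup_le hne ?_
    rintro v ⟨Q, hQ, rfl⟩
    have h2 : sibsonMI α Q (fun x z => ∑ y, W₁ x y * W₂ y z) ≤
        sibsonMI α (fun y => ∑ x, Q x * W₁ x y) W₂ :=
      sibson_le_of_Ssum_le (X := X) (X' := Y) (Y := Z) (Y' := Z) (Q := Q)
        (W := fun x z => ∑ y, W₁ x y * W₂ y z)
        (Q' := fun y => ∑ x, Q x * W₁ x y) (W' := W₂) hα (Ssum_pos hα hQ hWc)
        (Ssum_core2 hα hQ hW₁ hW₂)
    exact h2.trans (le_csSup (bdd_leak hα hW₂) ⟨_, push_isPMF hQ hW₁, rfl⟩)
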